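/- Let m be a positive integer and a an integer with a > m. Then ∑_{k=1}^{m} ψ₀(k)·ψ₀(a+1-k)/k = (1/2)·∑_{k=1}^{m} ( ψ₀²(k+a-m)/k + ψ₀²(k)/(k+a-m) - ψ₁(k+a-m)/k + ψ₁(k)/(k+a-m) ) + (1/(a-m) - ψ₀(a+1))·∑_{k=1}^{m} ψ₀(k+a-m)/k + (1/(a-m)²)·(ψ₀(a-m+1) - ψ₀(a+1) + ψ₀(m+1) - ψ₀(1)) - (1/(2(a-m)))·( 2ψ₀(a+1)·(ψ₀(a-m+1) + ψ₀(m+1) - ψ₀(1)) - ψ₀²(a-m+1) + ψ₁(a-m+1) - ψ₀²(a+1) - ψ₁(a+1) ) + (1/6)·( 3ψ₀²(a+1)·(ψ₀(m+1) - ψ₀(a-m+1)) - 3ψ₀(a+1)·( 2ψ₀(1)·ψ₀(a-m+1) - ψ₀²(a-m+1) + ψ₁(a-m+1) - ψ₁(a+1) + ψ₀²(1) + ψ₁(1) ) - ψ₀³(a-m+1) + 3ψ₀(1)·ψ₀²(a-m+1) + 3ψ₁(a+1)·ψ₀(m+1) - 3ψ₀(1)·ψ₁(a-m+1) + 3ψ₀(a-m+1)·(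 ψ₁(a-m+1) - ψ₁(a+1) + ψ₀²(m+1) + ψ₁(m+1) ) - ψ₂(a-m+1) + ψ₀³(a+1) + ψ₂(a+1) ). -/
import Mathlib

open Finset

/-- Digamma function at a positive integer argument: `ψ₀ l = -γ + ∑_{i=1}^{l-1} 1/i`. -/
noncomputable def ψ₀ (l : ℕ) : ℝ :=
  -Real.eulerMascheroniConstant + ∑ i ∈ Finset.range (l - 1), (1 : ℝ) / (i + 1)

/-- Trigamma function at a positive integer argument: `ψ₁ l = π²/6 - ∑_{i=1}^{l-1} 1/i²`. -/
noncomputable def ψ₁ (l : ℕ) : ℝ :=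
  Real.pi ^ 2 / 6 - ∑ i ∈ Finset.range (l - 1), (1 : ℝ) / (i + 1) ^ 2

/-- Tetragamma function at a positive integer argument:
`ψ₂ l = -2ζ(3) + 2∑_{i=1}^{l-1} 1/i³`, where `ζ(3) = ∑_{i=1}^∞ 1/i³`. -/
noncomputable def ψ₂ (l : ℕ) : ℝ :=
  -2 * (∑' i : ℕ, (1 : ℝ) / (i + 1) ^ 3) +
    2 * ∑ i ∈ Finset.range (l - 1), (1 : ℝ) / (i + 1) ^ 3

lemma psi0_succ (n : ℕ) (hn : 0 < n) : ψ₀ (n + 1) = ψ₀ n + 1 / n := by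
  obtain ⟨k, rfl⟩ := Nat.exists_eq_add_of_lt hn
  simp only [ψ₀, Nat.add_sub_cancel, Finset.sum_range_succ]
  push_cast
  ring

lemma psi1_succ (n : ℕ) (hn : 0 < n) : ψ₁ (n + 1) = ψ₁ n - 1 / (n : ℝ) ^ 2 := by
  obtain ⟨k, rfl⟩ := Nat.exists_eq_add_of_lt hn
  simp only [ψ₁, Nat.add_sub_cancel, Finset.sum_range_succ]
  push_cast
  ring

lemma psi2_succ (n : ℕ) (hn : 0 < n) : ψ₂ (n + 1) = ψ₂ n + 2 / (n : ℝ) ^ 3 := by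
  obtain ⟨k, rfl⟩ := Nat.exists_eq_add_of_lt hn
  simp only [ψ₂, Nat.add_sub_cancel, Finset.sum_range_succ]
  push_cast
  ring

lemma hseg (n c : ℕ) : ∑ k ∈ Icc 1 n, (1 : ℝ) / ((k : ℝ) + c) = ψ₀ (n + c + 1) - ψ₀ (c + 1) := by
  induction n with
  | zero => simp
  | succ n ih =>
    rw [Finset.sum_Icc_succ_top (by omega), ih]
    have h1 : n + 1 + c + 1 = (n + c + 1) + 1 := by omega
    rw [h1, psi0_succ (n + c + 1) (by omega)]
    push_cast
    ring

lemma h2seg (n c : ℕ) : ∑ k ∈ Icc 1 n, (1 : ℝ) / ((k : ℝ) + c) ^ 2 = ψ₁ (c + 1) - ψ₁ (n + c + 1) := by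
  induction n with
  | zero => simp
  | succ n ih =>
    rw [Finset.sum_Icc_succ_top (by omega), ih]
    have h1 : n + 1 + c + 1 = (n + c + 1) + 1 := by omega
    rw [h1, psi1_succ (n + c + 1) (by omega)]
    push_cast
    ring

lemma lemA (n c : ℕ) : ∑ k ∈ Icc 1 n, ψ₀ (k + c) / ((k : ℝ) + c) =
    (ψ₀ (n + c + 1) ^ 2 + ψ₁ (n + c + 1) - ψ₀ (c + 1) ^ 2 - ψ₁ (c + 1)) / 2 := by
  induction n with
  | zero => simp
  | succ n ih =>
    rw [Finset.sum_Icc_succ_top (by omega), ih]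
    have h1 : n + 1 + c + 1 = (n + c + 1) + 1 := by omega
    have h2 : n + 1 + c = n + c + 1 := by omega
    rw [h1, h2, psi0_succ (n + c + 1) (by omega), psi1_succ (n + c + 1) (by omega)]
    have hx : ((n : ℝ) + c + 1) ≠ 0 := by positivity
    have hc : ((n + c + 1 : ℕ) : ℝ) = (n : ℝ) + c + 1 := by push_cast; ring
    rw [hc]
    push_cast
    field_simp
    ring

lemma lemA0 (n : ℕ) : ∑ k ∈ Icc 1 n, ψ₀ k / (k : ℝ) =
    (ψ₀ (n + 1) ^ 2 + ψ₁ (n + 1) - ψ₀ 1 ^ 2 - ψ₁ 1) / 2 := by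
  have := lemA n 0
  simpa using this

lemma lemW (n d : ℕ) (hd : 0 < d) :
    ∑ k ∈ Icc 1 n, (ψ₀ k / ((k : ℝ) + d) + ψ₀ (k + d) / (k : ℝ)) =
      ψ₀ (n + 1) * ψ₀ (n + d + 1) - ψ₀ 1 * ψ₀ (d + 1) -
        (1 / (d : ℝ)) * (ψ₀ (n + 1) - ψ₀ (n + d + 1) + ψ₀ (d + 1) - ψ₀ 1) := by
  induction n with
  | zero => simp
  | succ n ih =>
    rw [Finset.sum_Icc_succ_top (by omega), ih]
    have h1 : n + 1 + d + 1 = (n + d + 1) + 1 := by omega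
    have h2 : n + 1 + d = n + d + 1 := by omega
    rw [h1, h2, psi0_succ (n + d + 1) (by omega), psi0_succ (n + 1) (by omega)]
    have hd' : (d : ℝ) ≠ 0 := by positivity
    have hn1 : ((n : ℝ) + 1) ≠ 0 := by positivity
    have hnd : ((n : ℝ) + 1 + d) ≠ 0 := by positivity
    have hc : ((n + d + 1 : ℕ) : ℝ) = (n : ℝ) + d + 1 := by push_cast; ring
    have hc2 : ((n + 1 : ℕ) : ℝ) = (n : ℝ) + 1 := by push_cast; ring
    rw [hc, hc2]
    push_cast
    field_simp
    ring

lemma lemC (n e : ℕ) :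
    ∑ k ∈ Icc 1 n, (ψ₀ k ^ 2 + ψ₁ k) / (((k : ℝ) + e) * ((k : ℝ) + e + 1)) =
      (ψ₀ 1 ^ 2 + ψ₁ 1) / ((e : ℝ) + 1) - (ψ₀ (n + 1) ^ 2 + ψ₁ (n + 1)) / ((n : ℝ) + e + 1) +
        (2 / ((e : ℝ) + 1)) * ((∑ k ∈ Icc 1 n, ψ₀ k / (k : ℝ)) -
          ∑ k ∈ Icc 1 n, ψ₀ k / ((k : ℝ) + e + 1)) := by
  induction n with
  | zero => simp
  | succ n ih =>
    rw [Finset.sum_Icc_succ_top (by omega), Finset.sum_Icc_succ_top (by omega),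
      Finset.sum_Icc_succ_top (by omega), ih]
    have h1 : n + 1 + 1 = (n + 1) + 1 := by omega
    rw [h1, psi0_succ (n + 1) (by omega), psi1_succ (n + 1) (by omega)]
    have hn1 : ((n : ℝ) + 1) ≠ 0 := by positivity
    have hne : ((n : ℝ) + 1 + e) ≠ 0 := by positivity
    have hne1 : ((n : ℝ) + 1 + e + 1) ≠ 0 := by positivity
    have he1 : ((e : ℝ) + 1) ≠ 0 := by positivity
    have hc2 : ((n + 1 : ℕ) : ℝ) = (n : ℝ) + 1 := by push_cast; ring
    rw [hc2]
    push_cast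
    field_simp
    ring

theorem aux (m : ℕ) : ∀ d : ℕ, 0 < d →
    ∑ k ∈ Icc 1 m, ψ₀ k * ψ₀ (m + d + 1 - k) / (k : ℝ) =
      (1 / 2) * ∑ k ∈ Icc 1 m,
          (ψ₀ (k + d) ^ 2 / (k : ℝ) + ψ₀ k ^ 2 / ((k : ℝ) + d) -
            ψ₁ (k + d) / (k : ℝ) + ψ₁ k / ((k : ℝ) + d)) +
        (1 / (d : ℝ) - ψ₀ (m + d + 1)) * ∑ k ∈ Icc 1 m, ψ₀ (k + d) / (k : ℝ) +
        (1 / (d : ℝ) ^ 2) * (ψ₀ (d + 1) - ψ₀ (m + d + 1) + ψ₀ (m + 1) - ψ₀ 1) -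
        (1 / (2 * (d : ℝ))) * (2 * ψ₀ (m + d + 1) * (ψ₀ (d + 1) + ψ₀ (m + 1) - ψ₀ 1) -
            ψ₀ (d + 1) ^ 2 + ψ₁ (d + 1) - ψ₀ (m + d + 1) ^ 2 - ψ₁ (m + d + 1)) +
        (1 / 6) * (3 * ψ₀ (m + d + 1) ^ 2 * (ψ₀ (m + 1) - ψ₀ (d + 1)) -
          3 * ψ₀ (m + d + 1) * (2 * ψ₀ 1 * ψ₀ (d + 1) - ψ₀ (d + 1) ^ 2 +
            ψ₁ (d + 1) - ψ₁ (m + d + 1) + ψ₀ 1 ^ 2 + ψ₁ 1) -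
          ψ₀ (d + 1) ^ 3 + 3 * ψ₀ 1 * ψ₀ (d + 1) ^ 2 +
          3 * ψ₁ (m + d + 1) * ψ₀ (m + 1) - 3 * ψ₀ 1 * ψ₁ (d + 1) +
          3 * ψ₀ (d + 1) * (ψ₁ (d + 1) - ψ₁ (m + d + 1) + ψ₀ (m + 1) ^ 2 +
            ψ₁ (m + 1)) -
          ψ₂ (d + 1) + ψ₀ (m + d + 1) ^ 3 + ψ₂ (m + d + 1)) := by
  induction m with
  | zero =>
    intro d hd
    norm_num
    ring
  | succ m ih =>
    intro e he
    -- nonzero facts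
    have he0 : (e : ℝ) ≠ 0 := by positivity
    have he1 : (e : ℝ) + 1 ≠ 0 := by positivity
    have hm1 : (m : ℝ) + 1 ≠ 0 := by positivity
    -- Step 1: peel LHS and apply IH
    have hL : ∑ k ∈ Icc 1 (m+1), ψ₀ k * ψ₀ (m + 1 + e + 1 - k) / (k : ℝ)
        = (∑ k ∈ Icc 1 m, ψ₀ k * ψ₀ (m + (e+1) + 1 - k) / (k : ℝ))
          + ψ₀ (m+1) * ψ₀ (e+1) / ((m+1 : ℕ) : ℝ) := by
      rw [Finset.sum_Icc_succ_top (by omega)]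
      congr 1
      · exact Finset.sum_congr rfl fun k hk => by
          have h : m + 1 + e + 1 - k = m + (e+1) + 1 - k := by omega
          rw [h]
      · have h : m + 1 + e + 1 - (m+1) = e + 1 := by omega
        rw [h]
    rw [hL, ih (e+1) (by omega)]
    -- Step 2: convert the new S2 sum
    have hS2 : ∑ k ∈ Icc 1 (m+1),
          (ψ₀ (k + e) ^ 2 / (k : ℝ) + ψ₀ k ^ 2 / ((k : ℝ) + e) -
            ψ₁ (k + e) / (k : ℝ) + ψ₁ k / ((k : ℝ) + e))
        = (∑ k ∈ Icc 1 (m+1),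
            (ψ₀ (k + (e+1)) ^ 2 / (k : ℝ) + ψ₀ k ^ 2 / ((k : ℝ) + ((e+1 : ℕ) : ℝ)) -
              ψ₁ (k + (e+1)) / (k : ℝ) + ψ₁ k / ((k : ℝ) + ((e+1 : ℕ) : ℝ))))
          - (2 / (e : ℝ)) * (∑ k ∈ Icc 1 (m+1), ψ₀ (k + (e+1)) / (k : ℝ))
          + (2 / (e : ℝ)) * (∑ k ∈ Icc 1 (m+1), ψ₀ (k + e) / ((k : ℝ) + e))
          + (2 / (e : ℝ)) * (∑ k ∈ Icc 1 (m+1), (1 : ℝ) / ((k : ℝ) + e) ^ 2)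
          + (∑ k ∈ Icc 1 (m+1), (ψ₀ k ^ 2 + ψ₁ k) / (((k : ℝ) + e) * ((k : ℝ) + e + 1))) := by
      rw [Finset.mul_sum, Finset.mul_sum, Finset.mul_sum, ← Finset.sum_sub_distrib,
        ← Finset.sum_add_distrib, ← Finset.sum_add_distrib, ← Finset.sum_add_distrib]
      apply Finset.sum_congr rfl
      intro k hk
      have hk1 : 1 ≤ k := (Finset.mem_Icc.mp hk).1
      have harg : k + (e + 1) = (k + e) + 1 := by omega
      rw [harg, psi0_succ (k+e) (by omega), psi1_succ (k+e) (by omega)]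
      have hkR : (1 : ℝ) ≤ (k : ℝ) := by exact_mod_cast hk1
      have hk0 : (k : ℝ) ≠ 0 := by linarith
      have hke : (k : ℝ) + e ≠ 0 := by positivity
      have hke1 : (k : ℝ) + e + 1 ≠ 0 := by positivity
      push_cast
      field_simp
      ring
    -- Step 3: convert the new A1 sum
    have hA1 : ∑ k ∈ Icc 1 (m+1), ψ₀ (k + e) / (k : ℝ)
        = (∑ k ∈ Icc 1 (m+1), ψ₀ (k + (e+1)) / (k : ℝ))
          - (1 / (e : ℝ)) * (∑ k ∈ Icc 1 (m+1), (1 : ℝ) / (k : ℝ))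
          + (1 / (e : ℝ)) * (∑ k ∈ Icc 1 (m+1), (1 : ℝ) / ((k : ℝ) + e)) := by
      rw [Finset.mul_sum, Finset.mul_sum, ← Finset.sum_sub_distrib, ← Finset.sum_add_distrib]
      apply Finset.sum_congr rfl
      intro k hk
      have hk1 : 1 ≤ k := (Finset.mem_Icc.mp hk).1
      have harg : k + (e + 1) = (k + e) + 1 := by omega
      rw [harg, psi0_succ (k+e) (by omega)]
      have hkR : (1 : ℝ) ≤ (k : ℝ) := by exact_mod_cast hk1
      have hk0 : (k : ℝ) ≠ 0 := by linarith
      have hke : (k : ℝ) + e ≠ 0 := by positivity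
      push_cast
      field_simp
      ring
    -- Step 4: P2 via lemW
    have hP2 : ∑ k ∈ Icc 1 (m+1), ψ₀ k / ((k : ℝ) + (e : ℝ) + 1)
        = (ψ₀ (m + 1 + 1) * ψ₀ (m + 1 + e + 1 + 1) - ψ₀ 1 * ψ₀ (e + 1 + 1) -
            (1 / ((e : ℝ) + 1)) * (ψ₀ (m + 1 + 1) - ψ₀ (m + 1 + e + 1 + 1) + ψ₀ (e + 1 + 1) - ψ₀ 1))
          - ∑ k ∈ Icc 1 (m+1), ψ₀ (k + (e+1)) / (k : ℝ) := by
      have hw := lemW (m+1) (e+1) (by omega)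
      rw [Finset.sum_add_distrib] at hw
      have hcongr : ∑ k ∈ Icc 1 (m+1), ψ₀ k / ((k : ℝ) + ((e+1 : ℕ) : ℝ))
          = ∑ k ∈ Icc 1 (m+1), ψ₀ k / ((k : ℝ) + (e : ℝ) + 1) := by
        apply Finset.sum_congr rfl
        intro k _
        push_cast
        ring_nf
      have harg1 : m + 1 + (e + 1) + 1 = m + 1 + e + 1 + 1 := by omega
      have harg2 : ((e + 1 : ℕ) : ℝ) = (e : ℝ) + 1 := by push_cast; ring
      rw [hcongr, harg1, harg2] at hw
      linarith [hw]
    -- Step 5: peels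
    have hpeelS2 : ∑ k ∈ Icc 1 (m+1),
          (ψ₀ (k + (e+1)) ^ 2 / (k : ℝ) + ψ₀ k ^ 2 / ((k : ℝ) + ((e+1 : ℕ) : ℝ)) -
            ψ₁ (k + (e+1)) / (k : ℝ) + ψ₁ k / ((k : ℝ) + ((e+1 : ℕ) : ℝ)))
        = (∑ k ∈ Icc 1 m,
            (ψ₀ (k + (e+1)) ^ 2 / (k : ℝ) + ψ₀ k ^ 2 / ((k : ℝ) + ((e+1 : ℕ) : ℝ)) -
              ψ₁ (k + (e+1)) / (k : ℝ) + ψ₁ k / ((k : ℝ) + ((e+1 : ℕ) : ℝ))))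
          + (ψ₀ (m + 1 + e + 1) ^ 2 / ((m+1 : ℕ) : ℝ)
              + ψ₀ (m+1) ^ 2 / (((m+1 : ℕ) : ℝ) + ((e+1 : ℕ) : ℝ))
              - ψ₁ (m + 1 + e + 1) / ((m+1 : ℕ) : ℝ)
              + ψ₁ (m+1) / (((m+1 : ℕ) : ℝ) + ((e+1 : ℕ) : ℝ))) := by
      rw [Finset.sum_Icc_succ_top (by omega)]
      have harg : m + 1 + (e + 1) = m + 1 + e + 1 := by omega
      rw [harg]
    have hpeelA1 : ∑ k ∈ Icc 1 (m+1), ψ₀ (k + (e+1)) / (k : ℝ)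
        = (∑ k ∈ Icc 1 m, ψ₀ (k + (e+1)) / (k : ℝ)) + ψ₀ (m + 1 + e + 1) / ((m+1 : ℕ) : ℝ) := by
      rw [Finset.sum_Icc_succ_top (by omega)]
      have harg : m + 1 + (e + 1) = m + 1 + e + 1 := by omega
      rw [harg]
    -- Step 6: closed sums
    have hs0 : ∑ k ∈ Icc 1 (m+1), (1 : ℝ) / (k : ℝ) = ψ₀ (m + 1 + 1) - ψ₀ 1 := by
      simpa using hseg (m+1) 0
    -- assemble
    rw [hS2, hA1, lemC (m+1) e, hP2, hpeelS2, hpeelA1, lemA (m+1) e, h2seg (m+1) e,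
      hs0, hseg (m+1) e, lemA0 (m+1)]
    -- normalize remaining nat args from IH side
    rw [show m + (e + 1) + 1 = m + 1 + e + 1 by omega]
    -- expand successor recurrences
    rw [psi0_succ (m + 1 + e + 1) (by omega), psi0_succ (m+1) (by omega),
      psi1_succ (m+1) (by omega), psi0_succ (e+1) (by omega), psi1_succ (e+1) (by omega),
      psi2_succ (e+1) (by omega)]
    have hM0 : (m : ℝ) + 1 + e + 1 ≠ 0 := by positivity
    have h2 : (1/((e:ℝ)+1))*(1/((m:ℝ)+1)) - (1/((e:ℝ)+1))*(1/((m:ℝ)+1+e+1))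
        - (1/((m:ℝ)+1))*(1/((m:ℝ)+1+e+1)) = 0 := by
      field_simp
      ring
    push_cast
    simp only [div_eq_mul_inv, one_div, mul_inv, ← inv_pow] at h2 ⊢
    linear_combination (-(((e:ℝ)+1)⁻¹) - ψ₀ (m+1)) * h2

theorem stmt11 (m a : ℕ) (hm : 0 < m) (ha : m < a) :
    ∑ k ∈ Finset.Icc 1 m, ψ₀ k * ψ₀ (a + 1 - k) / (k : ℝ) =
      (1 / 2) * ∑ k ∈ Finset.Icc 1 m,
          (ψ₀ (k + a - m) ^ 2 / (k : ℝ) + ψ₀ k ^ 2 / ((k + a - m : ℕ) : ℝ) -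
            ψ₁ (k + a - m) / (k : ℝ) + ψ₁ k / ((k + a - m : ℕ) : ℝ)) +
        (1 / ((a : ℝ) - m) - ψ₀ (a + 1)) *
          ∑ k ∈ Finset.Icc 1 m, ψ₀ (k + a - m) / (k : ℝ) +
        (1 / ((a : ℝ) - m) ^ 2) *
          (ψ₀ (a - m + 1) - ψ₀ (a + 1) + ψ₀ (m + 1) - ψ₀ 1) -
        (1 / (2 * ((a : ℝ) - m))) *
          (2 * ψ₀ (a + 1) * (ψ₀ (a - m + 1) + ψ₀ (m + 1) - ψ₀ 1) -
            ψ₀ (a - m + 1) ^ 2 + ψ₁ (a - m + 1) - ψ₀ (a + 1) ^ 2 - ψ₁ (a + 1)) +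
        (1 / 6) * (3 * ψ₀ (a + 1) ^ 2 * (ψ₀ (m + 1) - ψ₀ (a - m + 1)) -
          3 * ψ₀ (a + 1) * (2 * ψ₀ 1 * ψ₀ (a - m + 1) - ψ₀ (a - m + 1) ^ 2 +
            ψ₁ (a - m + 1) - ψ₁ (a + 1) + ψ₀ 1 ^ 2 + ψ₁ 1) -
          ψ₀ (a - m + 1) ^ 3 + 3 * ψ₀ 1 * ψ₀ (a - m + 1) ^ 2 +
          3 * ψ₁ (a + 1) * ψ₀ (m + 1) - 3 * ψ₀ 1 * ψ₁ (a - m + 1) +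
          3 * ψ₀ (a - m + 1) * (ψ₁ (a - m + 1) - ψ₁ (a + 1) + ψ₀ (m + 1) ^ 2 +
            ψ₁ (m + 1)) -
          ψ₂ (a - m + 1) + ψ₀ (a + 1) ^ 3 + ψ₂ (a + 1)) := by
  obtain ⟨d, hd, rfl⟩ : ∃ d, 0 < d ∧ a = m + d := ⟨a - m, by omega, by omega⟩
  have hc : ((m + d : ℕ) : ℝ) - (m : ℕ) = (d : ℝ) := by push_cast; ring
  have h1 : m + d - m = d := by omega
  have hsum1 : ∑ k ∈ Finset.Icc 1 m,
        (ψ₀ (k + (m + d) - m) ^ 2 / (k : ℝ) + ψ₀ k ^ 2 / ((k + (m + d) - m : ℕ) : ℝ) -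
          ψ₁ (k + (m + d) - m) / (k : ℝ) + ψ₁ k / ((k + (m + d) - m : ℕ) : ℝ))
      = ∑ k ∈ Finset.Icc 1 m,
        (ψ₀ (k + d) ^ 2 / (k : ℝ) + ψ₀ k ^ 2 / ((k : ℝ) + d) -
          ψ₁ (k + d) / (k : ℝ) + ψ₁ k / ((k : ℝ) + d)) := by
    apply Finset.sum_congr rfl
    intro k _
    have h2 : k + (m + d) - m = k + d := by omega
    rw [h2]
    push_cast
    ring
  have hsum2 : ∑ k ∈ Finset.Icc 1 m, ψ₀ (k + (m + d) - m) / (k : ℝ)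
      = ∑ k ∈ Finset.Icc 1 m, ψ₀ (k + d) / (k : ℝ) := by
    apply Finset.sum_congr rfl
    intro k _
    have h2 : k + (m + d) - m = k + d := by omega
    rw [h2]
  rw [hc, h1, hsum1, hsum2]
  exact aux m d hd
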